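/- Let C be a finite set of n clients, let 1 ≤ k ≤ n, let f : Finset Client → Label be a base FL algorithm, let y be a label, and let m be a natural number with m ≤ n − k. If for every label j ≠ y one has p_y(C, f) − p_j(C, f) > 2 − 2·C(n−m,k)/C(n,k), then for every finite set C' of clients with |C'| = n and |C' \ C| ≤ m, and for every label j ≠ y, one has N_j(C', f) < N_y(C', f); i.e., the majority vote over the k-element subsets of C' still uniquely selects y. -/
import Mathlib


open Finset

/-- Label count: number of `k`-element subsets `T` of `S` with `f T = j`. -/
def labelCount {Client Label : Type} [DecidableEq Client] [DecidableEq Label]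
    (k : ℕ) (f : Finset Client → Label) (S : Finset Client) (j : Label) : ℕ :=
  ((S.powersetCard k).filter (fun T => f T = j)).card

/-- Label probability: `N_j(S, f) / C(|S|, k)` as a real number. -/
noncomputable def labelProb {Client Label : Type} [DecidableEq Client] [DecidableEq Label]
    (k : ℕ) (f : Finset Client → Label) (S : Finset Client) (j : Label) : ℝ :=
  (labelCount k f S j : ℝ) / (Nat.choose S.card k : ℝ)

lemma labelCount_mono {Client Label : Type} [DecidableEq Client] [DecidableEq Label]
    (k : ℕ) (f : Finset Client → Label) {D S : Finset Client} (h : D ⊆ S) (j : Label) :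
    labelCount k f D j ≤ labelCount k f S j := by
  apply Finset.card_le_card
  exact Finset.filter_subset_filter _ (Finset.powersetCard_mono h)

lemma labelCount_le_sub {Client Label : Type} [DecidableEq Client] [DecidableEq Label]
    (k : ℕ) (f : Finset Client → Label) {D S : Finset Client} (h : D ⊆ S) (j : Label) :
    labelCount k f S j ≤ labelCount k f D j + (S.card.choose k - D.card.choose k) := by
  classical
  set P := S.powersetCard k
  set Q := D.powersetCard k
  have hQP : Q ⊆ P := Finset.powersetCard_mono h
  have hsub : P.filter (fun T => f T = j) ⊆
      Q.filter (fun T => f T = j) ∪ (P \ Q) := by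
    intro T hT
    simp only [Finset.mem_filter, Finset.mem_union, Finset.mem_sdiff] at *
    by_cases hTQ : T ∈ Q
    · exact Or.inl ⟨hTQ, hT.2⟩
    · exact Or.inr ⟨hT.1, hTQ⟩
  calc labelCount k f S j ≤ (Q.filter (fun T => f T = j) ∪ (P \ Q)).card :=
        Finset.card_le_card hsub
    _ ≤ (Q.filter (fun T => f T = j)).card + (P \ Q).card := Finset.card_union_le _ _
    _ = labelCount k f D j + (P.card - Q.card) := by
        rw [Finset.card_sdiff_of_subset hQP]; rfl
    _ = labelCount k f D j + (S.card.choose k - D.card.choose k) := by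
        simp [P, Q, Finset.card_powersetCard]

theorem flcertP_certified_security_exact_probs
    {Client Label : Type} [DecidableEq Client] [DecidableEq Label]
    (n k : ℕ) (hk1 : 1 ≤ k) (hkn : k ≤ n)
    (C : Finset Client) (hC : C.card = n)
    (f : Finset Client → Label) (y : Label)
    (m : ℕ) (hm : m ≤ n - k)
    (hgap : ∀ j : Label, j ≠ y →
      labelProb k f C y - labelProb k f C j
        > 2 - 2 * (Nat.choose (n - m) k : ℝ) / (Nat.choose n k : ℝ)) :
    ∀ C' : Finset Client, C'.card = n → (C' \ C).card ≤ m →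
      ∀ j : Label, j ≠ y → labelCount k f C' j < labelCount k f C' y := by
  intro C' hC' hdiff j hj
  classical
  set D := C ∩ C' with hD
  have hDC : D ⊆ C := Finset.inter_subset_left
  have hDC' : D ⊆ C' := Finset.inter_subset_right
  -- cardinality of D
  have e1 : (C \ C').card + (C ∩ C').card = C.card := Finset.card_sdiff_add_card_inter C C'
  have e2 : (C' \ C).card + (C' ∩ C).card = C'.card := Finset.card_sdiff_add_card_inter C' C
  have einter : (C' ∩ C).card = (C ∩ C').card := by rw [Finset.inter_comm]
  have hcardD : n - m ≤ D.card := by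
    have hDr : D.card = (C ∩ C').card := rfl
    simp only [hC, hC', einter] at e1 e2
    omega
  have hDn : D.card ≤ n := by
    have := Finset.card_le_card hDC
    omega
  set B := n.choose k with hBdef
  set E := D.card.choose k with hEdef
  set M := (n - m).choose k with hMdef
  have hME : M ≤ E := Nat.choose_le_choose k hcardD
  have hEB : E ≤ B := Nat.choose_le_choose k hDn
  have hBpos : 0 < B := Nat.choose_pos hkn
  have hBR : (0:ℝ) < (B:ℝ) := by exact_mod_cast hBpos
  -- turn the gap hypothesis into a natural-number inequality
  have hkey : labelCount k f C j + 2 * B < labelCount k f C y + 2 * M := by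
    have h := hgap j hj
    rw [labelProb, labelProb, hC] at h
    have h2 : (2 - 2 * (M:ℝ) / B) * B <
        ((labelCount k f C y : ℝ) / B - (labelCount k f C j : ℝ) / B) * B :=
      mul_lt_mul_of_pos_right h hBR
    have h3 : 2 * (B:ℝ) - 2 * M < (labelCount k f C y : ℝ) - labelCount k f C j := by
      field_simp at h2
      linarith
    have h4 : (labelCount k f C j : ℝ) + 2 * B < (labelCount k f C y : ℝ) + 2 * M := by
      linarith
    exact_mod_cast h4
  have h1 : labelCount k f C y ≤ labelCount k f D y + (B - E) := by
    have := labelCount_le_sub k f hDC y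
    rwa [hC] at this
  have h2 : labelCount k f D y ≤ labelCount k f C' y := labelCount_mono k f hDC' y
  have h3 : labelCount k f C' j ≤ labelCount k f D j + (B - E) := by
    have := labelCount_le_sub k f hDC' j
    rwa [hC'] at this
  have h4 : labelCount k f D j ≤ labelCount k f C j := labelCount_mono k f hDC j
  omega
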